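/- arXiv:2108.05683 — 2 statements merged into one kernel-verified Lean document; each statement's English description precedes it below -/
import Mathlib

section
/- Let S = k[x_1,...,x_n] and fix 1 ≤ h < n. Let Γ_1 be a list of ℕ × ℕ^(n−h)-homogeneous polynomials of S, each of total degree at most j − 1, and let Γ_2 be a list of ℕ × ℕ^(n−h)-homogeneous polynomials, each of total degree exactly j, with |Γ_2| ≤ λ_j(Γ_1). Let Γ be the list obtained by appending Γ_2 to Γ_1. Then λ_{j+1}(Γ) ≤ 2·λ_j(Γ_1)^2 + (2h − 1)·λ_j(Γ_1). -/
open MvPolynomial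

noncomputable section

/-- The dimension `λ_N(Γ)` of the degree-`N` graded piece of the free `S̄`-module `Λ(Γ)`
attached to a list `Γ` of `ℕ × ℕ^(n-h)`-homogeneous elements `γ_r = γ̄_r · m_r`
(recorded by the degrees `e r = deg γ̄_r` and monomials `μ r = m_r`):
`Λ(Γ) = ⊕_r ⊕_{m ∈ L_r} S̄ e_m^r` with `deg e_m^r = deg m + e r`, where
`L_r = { lcm(m_{i_1},…,m_{i_s}, m_r) : {i_1,…,i_s} ⊆ {1,…,r-1} }`, and
`dim_k S̄_d = C(d + h - 1, h - 1)` for the polynomial ring `S̄` in `h` variables. -/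
noncomputable def lamDim {n : ℕ} (h : ℕ) {t : ℕ} (e : Fin t → ℕ)
    (μ : Fin t → (Fin n →₀ ℕ)) (N : ℕ) : ℕ := by
  classical
  exact ∑ r : Fin t,
    ∑ m ∈ ((Finset.univ.filter (fun s : Fin t => s < r)).powerset).image
        (fun A => A.sup μ ⊔ μ r),
      if (m.sum fun _ v => v) + e r ≤ N then
        Nat.choose (N - ((m.sum fun _ v => v) + e r) + h - 1) (h - 1)
      else 0

namespace LC
open Finset

variable {n : ℕ}

/-- total degree of an exponent vector -/
def dg (m : Fin n →₀ ℕ) : ℕ := m.sum fun _ v => v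

lemma dg_eq (m : Fin n →₀ ℕ) {s : Finset (Fin n)} (hs : m.support ⊆ s) :
    dg m = ∑ i ∈ s, m i :=
  Finsupp.sum_of_support_subset m hs _ (fun _ _ => rfl)

lemma dg_mono {a b : Fin n →₀ ℕ} (hab : a ≤ b) : dg a ≤ dg b := by
  rw [dg_eq a (subset_union_left (s₂ := b.support)),
      dg_eq b (subset_union_right (s₁ := a.support))]
  exact Finset.sum_le_sum fun i _ => hab i

lemma eq_of_le_of_dg_le {a b : Fin n →₀ ℕ} (hab : a ≤ b) (hd : dg b ≤ dg a) : a = b := by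
  have h1 : dg a = ∑ i ∈ a.support ∪ b.support, a i :=
    dg_eq a (subset_union_left (s₂ := b.support))
  have h2 : dg b = ∑ i ∈ a.support ∪ b.support, b i :=
    dg_eq b (subset_union_right (s₁ := a.support))
  have hsum : ∑ i ∈ a.support ∪ b.support, a i = ∑ i ∈ a.support ∪ b.support, b i := by
    have := Finset.sum_le_sum (s := a.support ∪ b.support) (fun i _ => hab i)
    omega
  have := (Finset.sum_eq_sum_iff_of_le (fun i _ => hab i)).1 hsum
  ext i
  by_cases hi : i ∈ a.support ∪ b.support
  · exact this i hi
  · simp only [Finset.mem_union, Finsupp.mem_support_iff, not_or, not_not] at hi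
    rw [hi.1, hi.2]

lemma dg_lt_of_lt {a b : Fin n →₀ ℕ} (hab : a ≤ b) (hne : a ≠ b) : dg a < dg b := by
  rcases lt_or_ge (dg a) (dg b) with h | h
  · exact h
  · exact absurd (eq_of_le_of_dg_le hab h) hne

lemma finset_sup_apply {α : Type*} (A : Finset α) (μ : α → (Fin n →₀ ℕ)) (c : Fin n) :
    (A.sup μ) c = A.sup (fun i => μ i c) := by
  classical
  induction A using Finset.cons_induction with
  | empty => rfl
  | cons a s ha ih => simp [Finset.sup_cons, Finsupp.sup_apply, ih]


noncomputable def Mset {t : ℕ} (μ : Fin t → (Fin n →₀ ℕ)) (r : Fin t) : Finset (Fin n →₀ ℕ) :=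
  ((Finset.univ.filter (fun s : Fin t => s < r)).powerset).image (fun A => A.sup μ ⊔ μ r)

lemma mem_Mset {t : ℕ} {μ : Fin t → (Fin n →₀ ℕ)} {r : Fin t} {m : Fin n →₀ ℕ} :
    m ∈ Mset μ r ↔ ∃ A ⊆ Finset.univ.filter (fun s : Fin t => s < r), A.sup μ ⊔ μ r = m := by
  simp [Mset, Finset.mem_image, Finset.mem_powerset]

lemma self_mem_Mset {t : ℕ} (μ : Fin t → (Fin n →₀ ℕ)) (r : Fin t) : μ r ∈ Mset μ r :=
  mem_Mset.2 ⟨∅, by simp⟩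

lemma sup_mem_Mset {t : ℕ} (μ : Fin t → (Fin n →₀ ℕ)) {i r : Fin t} (hir : i < r) :
    μ i ⊔ μ r ∈ Mset μ r :=
  mem_Mset.2 ⟨{i}, by simp [hir]⟩

lemma le_of_mem_Mset {t : ℕ} {μ : Fin t → (Fin n →₀ ℕ)} {r : Fin t} {m : Fin n →₀ ℕ}
    (hm : m ∈ Mset μ r) : μ r ≤ m := by
  obtain ⟨A, -, rfl⟩ := mem_Mset.1 hm
  exact le_sup_right


lemma decomp {t : ℕ} {e : Fin t → ℕ} {μ : Fin t → (Fin n →₀ ℕ)} {r : Fin t}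
    {m : Fin n →₀ ℕ} {j : ℕ} (hm : m ∈ Mset μ r) (hd : dg m + e r = j + 1)
    (hbase : dg (μ r) + e r ≤ j) :
    (∃ i, i < r ∧ μ i ⊔ μ r = m) ∨
    (∃ p : (Fin n →₀ ℕ) × (Fin n →₀ ℕ), p.1 ∈ Mset μ r ∧ p.2 ∈ Mset μ r ∧
      dg p.1 + e r ≤ j ∧ dg p.2 + e r ≤ j ∧ p.1 ≠ p.2 ∧ p.1 ⊔ p.2 = m) := by
  classical
  set 𝒜 := ((Finset.univ.filter (fun s : Fin t => s < r)).powerset).filter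
      (fun B => B.sup μ ⊔ μ r = m) with h𝒜
  have hne : 𝒜.Nonempty := by
    obtain ⟨A, hA, hAm⟩ := mem_Mset.1 hm
    exact ⟨A, by simp [h𝒜, Finset.mem_powerset.2 hA, hAm]⟩
  obtain ⟨B, hB, hBmin⟩ := Finset.exists_min_image 𝒜 Finset.card hne
  simp only [h𝒜, Finset.mem_filter, Finset.mem_powerset] at hB
  obtain ⟨hBsub, hBm⟩ := hB
  rcases Finset.eq_empty_or_nonempty B with rfl | ⟨i, hiB⟩
  · exfalso
    simp only [Finset.sup_empty] at hBm
    have : m = μ r := by rw [← hBm]; exact bot_sup_eq _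
    rw [this] at hd; omega
  have hir : i < r := by have := hBsub hiB; simpa using this
  by_cases hcase : μ i ⊔ μ r = m
  · exact Or.inl ⟨i, hir, hcase⟩
  · right
    set m'' : Fin n →₀ ℕ := μ i ⊔ μ r with hm''def
    set m' : Fin n →₀ ℕ := (B.erase i).sup μ ⊔ μ r with hm'def
    have hBsup : B.sup μ = μ i ⊔ (B.erase i).sup μ := by
      conv_lhs => rw [← Finset.insert_erase hiB]
      rw [Finset.sup_insert]
    have hjoin : m' ⊔ m'' = m := by
      rw [← hBm, hBsup, hm'def, hm''def]
      ext c
      simp only [Finsupp.sup_apply]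
      omega
    have hm'mem : m' ∈ Mset μ r :=
      mem_Mset.2 ⟨B.erase i, (Finset.erase_subset _ _).trans hBsub, rfl⟩
    have hm''mem : m'' ∈ Mset μ r := sup_mem_Mset μ hir
    have hm'le : m' ≤ m := by rw [← hjoin]; exact le_sup_left
    have hm''le : m'' ≤ m := by rw [← hjoin]; exact le_sup_right
    have hm'ne : m' ≠ m := by
      intro hEq
      have hmem : B.erase i ∈ 𝒜 := by
        rw [h𝒜]
        refine Finset.mem_filter.2 ⟨Finset.mem_powerset.2
          ((Finset.erase_subset _ _).trans hBsub), ?_⟩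
        rw [← hm'def]; exact hEq
      have hcard := hBmin _ hmem
      have := Finset.card_erase_lt_of_mem hiB
      omega
    have hd' : dg m' + e r ≤ j := by
      have hle : dg m' ≤ dg m := dg_mono hm'le
      have hne2 : dg m' ≠ dg m := fun hEq => hm'ne (eq_of_le_of_dg_le hm'le hEq.symm.le)
      omega
    have hd'' : dg m'' + e r ≤ j := by
      have hle : dg m'' ≤ dg m := dg_mono hm''le
      have hne2 : dg m'' ≠ dg m := fun hEq => hcase (eq_of_le_of_dg_le hm''le hEq.symm.le)
      omega
    have hne2 : m' ≠ m'' := by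
      intro hEq
      rw [hEq, sup_idem] at hjoin
      exact hcase hjoin
    exact ⟨(m', m''), hm'mem, hm''mem, hd', hd'', hne2, hjoin⟩



lemma sig_snd {α : Type*} {β : Type*} {a c : α} {b d : β}
    (h : (⟨a, b⟩ : Σ _ : α, β) = ⟨c, d⟩) : b = d := by
  cases h; rfl

lemma count_bound {t : ℕ} (e : Fin t → ℕ) (μ : Fin t → (Fin n →₀ ℕ)) (j : ℕ)
    (hbase : ∀ r, dg (μ r) + e r ≤ j) :
    ∑ r : Fin t, ((Mset μ r).filter (fun m => dg m + e r = j + 1)).card ≤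
      Nat.choose (∑ r : Fin t, ((Mset μ r).filter (fun m => dg m + e r ≤ j)).card) 2 := by
  classical
  set X : (r : Fin t) → Finset (Fin n →₀ ℕ) :=
    fun r => (Mset μ r).filter (fun m => dg m + e r = j + 1) with hXdef
  set Y : (r : Fin t) → Finset (Fin n →₀ ℕ) :=
    fun r => (Mset μ r).filter (fun m => dg m + e r ≤ j) with hYdef
  rw [← Finset.card_sigma, ← Finset.card_sigma, ← Finset.card_powersetCard]
  set C1 : (Σ _ : Fin t, (Fin n →₀ ℕ)) → Prop :=
    fun x => ∃ i, i < x.1 ∧ μ i ⊔ μ x.1 = x.2 with hC1def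
  set C2 : (Σ _ : Fin t, (Fin n →₀ ℕ)) → Prop :=
    fun x => ∃ p : (Fin n →₀ ℕ) × (Fin n →₀ ℕ), p.1 ∈ Mset μ x.1 ∧ p.2 ∈ Mset μ x.1 ∧
      dg p.1 + e x.1 ≤ j ∧ dg p.2 + e x.1 ≤ j ∧ p.1 ≠ p.2 ∧ p.1 ⊔ p.2 = x.2 with hC2def
  set f : (Σ _ : Fin t, (Fin n →₀ ℕ)) → Finset (Σ _ : Fin t, (Fin n →₀ ℕ)) :=
    fun x =>
      if hc : C1 x then {⟨hc.choose, μ hc.choose⟩, ⟨x.1, μ x.1⟩}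
      else if hc2 : C2 x then {⟨x.1, hc2.choose.1⟩, ⟨x.1, hc2.choose.2⟩}
      else ∅ with hfdef
  have hmemX : ∀ x : (Σ _ : Fin t, (Fin n →₀ ℕ)), x ∈ Finset.univ.sigma X →
      x.2 ∈ Mset μ x.1 ∧ dg x.2 + e x.1 = j + 1 := by
    intro x hx
    have := (Finset.mem_sigma.1 hx).2
    rw [hXdef] at this
    exact Finset.mem_filter.1 this
  have hC1orC2 : ∀ x : (Σ _ : Fin t, (Fin n →₀ ℕ)), x ∈ Finset.univ.sigma X →
      C1 x ∨ C2 x := by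
    intro x hx
    obtain ⟨h1, h2⟩ := hmemX x hx
    exact decomp h1 h2 (hbase x.1)
  have hμY : ∀ r : Fin t, (⟨r, μ r⟩ : Σ _ : Fin t, (Fin n →₀ ℕ)) ∈ Finset.univ.sigma Y := by
    intro r
    exact Finset.mem_sigma.2 ⟨Finset.mem_univ _,
      Finset.mem_filter.2 ⟨self_mem_Mset μ r, hbase r⟩⟩
  apply Finset.card_le_card_of_injOn f
  · -- maps into powersetCard 2
    intro x hx
    rw [Finset.mem_coe, Finset.mem_powersetCard]
    by_cases hc : C1 x
    · obtain ⟨hilt, hieq⟩ := hc.choose_spec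
      rw [hfdef]
      simp only [dif_pos hc]
      constructor
      · intro z hz
        rcases Finset.mem_insert.1 hz with rfl | hz
        · exact hμY _
        · rw [Finset.mem_singleton.1 hz]; exact hμY _
      · refine Finset.card_pair ?_
        intro hEq
        exact absurd (congrArg Sigma.fst hEq) (ne_of_lt hilt)
    · have hc2 : C2 x := (hC1orC2 x hx).resolve_left hc
      obtain ⟨hp1, hp2, hd1, hd2, hpne, hpsup⟩ := hc2.choose_spec
      rw [hfdef]
      simp only [dif_neg hc, dif_pos hc2]
      constructor
      · intro z hz
        rcases Finset.mem_insert.1 hz with rfl | hz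
        · exact Finset.mem_sigma.2 ⟨Finset.mem_univ _, Finset.mem_filter.2 ⟨hp1, hd1⟩⟩
        · rw [Finset.mem_singleton.1 hz]
          exact Finset.mem_sigma.2 ⟨Finset.mem_univ _, Finset.mem_filter.2 ⟨hp2, hd2⟩⟩
      · refine Finset.card_pair ?_
        intro hEq
        exact hpne (sig_snd hEq)
  · -- injectivity
    rintro ⟨xr, xm⟩ hx ⟨yr, ym⟩ hy hf
    rw [Finset.mem_coe] at hx hy
    by_cases hc1x : C1 ⟨xr, xm⟩ <;> by_cases hc1y : C1 ⟨yr, ym⟩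
    · -- both pair-type
      obtain ⟨hxlt0, hxeq0⟩ := hc1x.choose_spec
      obtain ⟨hylt0, hyeq0⟩ := hc1y.choose_spec
      set i := hc1x.choose
      set i' := hc1y.choose
      have hxlt : i < xr := hxlt0
      have hxeq : μ i ⊔ μ xr = xm := hxeq0
      have hylt : i' < yr := hylt0
      have hyeq : μ i' ⊔ μ yr = ym := hyeq0
      rw [hfdef] at hf
      simp only [dif_pos hc1x, dif_pos hc1y] at hf
      have hmx : (⟨xr, μ xr⟩ : Σ _ : Fin t, (Fin n →₀ ℕ)) ∈
          ({⟨i', μ i'⟩, ⟨yr, μ yr⟩} : Finset (Σ _ : Fin t, (Fin n →₀ ℕ))) := by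
        rw [← hf]; simp
      have hmy : (⟨yr, μ yr⟩ : Σ _ : Fin t, (Fin n →₀ ℕ)) ∈
          ({⟨i, μ i⟩, ⟨xr, μ xr⟩} : Finset (Σ _ : Fin t, (Fin n →₀ ℕ))) := by
        rw [hf]; simp
      have hrr : xr = yr := by
        rcases Finset.mem_insert.1 hmx with hEq | hEq
        · have h1 : xr = i' := congrArg Sigma.fst hEq
          rcases Finset.mem_insert.1 hmy with hEq' | hEq'
          · have h2 : yr = i := congrArg Sigma.fst hEq'
            exfalso
            have : xr < xr := lt_trans (h1 ▸ hylt) (h2 ▸ hxlt)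
            exact lt_irrefl _ this
          · exact (congrArg Sigma.fst (Finset.mem_singleton.1 hEq')).symm
        · exact congrArg Sigma.fst (Finset.mem_singleton.1 hEq)
      have hii : i = i' := by
        have hmi : (⟨i, μ i⟩ : Σ _ : Fin t, (Fin n →₀ ℕ)) ∈
            ({⟨i', μ i'⟩, ⟨yr, μ yr⟩} : Finset (Σ _ : Fin t, (Fin n →₀ ℕ))) := by
          rw [← hf]; simp; exact Or.inl ⟨rfl, rfl⟩
        rcases Finset.mem_insert.1 hmi with hEq | hEq
        · exact congrArg Sigma.fst hEq
        · exfalso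
          have h2 : i = yr := congrArg Sigma.fst (Finset.mem_singleton.1 hEq)
          rw [h2, ← hrr] at hxlt
          exact lt_irrefl _ hxlt
      subst hrr
      have : xm = ym := by rw [← hxeq, ← hyeq, hii]
      rw [this]
    · -- x pair-type, y not: contradiction
      exfalso
      obtain ⟨hxlt0, hxeq0⟩ := hc1x.choose_spec
      set i := hc1x.choose
      have hxlt : i < xr := hxlt0
      rw [hfdef] at hf
      simp only [dif_pos hc1x, dif_neg hc1y] at hf
      by_cases hc2y : C2 ⟨yr, ym⟩
      · simp only [dif_pos hc2y] at hf
        have hmi : (⟨i, μ i⟩ : Σ _ : Fin t, (Fin n →₀ ℕ)) ∈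
            ({⟨yr, hc2y.choose.1⟩, ⟨yr, hc2y.choose.2⟩} :
              Finset (Σ _ : Fin t, (Fin n →₀ ℕ))) := by
          rw [← hf]; simp; exact Or.inl ⟨rfl, rfl⟩
        have hmx : (⟨xr, μ xr⟩ : Σ _ : Fin t, (Fin n →₀ ℕ)) ∈
            ({⟨yr, hc2y.choose.1⟩, ⟨yr, hc2y.choose.2⟩} :
              Finset (Σ _ : Fin t, (Fin n →₀ ℕ))) := by
          rw [← hf]; simp
        have h1 : i = yr := by
          rcases Finset.mem_insert.1 hmi with hEq | hEq
          · exact congrArg Sigma.fst hEq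
          · exact congrArg Sigma.fst (Finset.mem_singleton.1 hEq)
        have h2 : xr = yr := by
          rcases Finset.mem_insert.1 hmx with hEq | hEq
          · exact congrArg Sigma.fst hEq
          · exact congrArg Sigma.fst (Finset.mem_singleton.1 hEq)
        rw [h1, ← h2] at hxlt
        exact lt_irrefl _ hxlt
      · simp only [dif_neg hc2y] at hf
        exact Finset.insert_ne_empty _ _ hf
    · -- y pair-type, x not
      exfalso
      obtain ⟨hylt0, hyeq0⟩ := hc1y.choose_spec
      set i := hc1y.choose
      have hylt : i < yr := hylt0
      rw [hfdef] at hf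
      simp only [dif_neg hc1x, dif_pos hc1y] at hf
      by_cases hc2x : C2 ⟨xr, xm⟩
      · simp only [dif_pos hc2x] at hf
        have hmi : (⟨i, μ i⟩ : Σ _ : Fin t, (Fin n →₀ ℕ)) ∈
            ({⟨xr, hc2x.choose.1⟩, ⟨xr, hc2x.choose.2⟩} :
              Finset (Σ _ : Fin t, (Fin n →₀ ℕ))) := by
          rw [hf]; simp; exact Or.inl ⟨rfl, rfl⟩
        have hmy : (⟨yr, μ yr⟩ : Σ _ : Fin t, (Fin n →₀ ℕ)) ∈
            ({⟨xr, hc2x.choose.1⟩, ⟨xr, hc2x.choose.2⟩} :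
              Finset (Σ _ : Fin t, (Fin n →₀ ℕ))) := by
          rw [hf]; simp
        have h1 : i = xr := by
          rcases Finset.mem_insert.1 hmi with hEq | hEq
          · exact congrArg Sigma.fst hEq
          · exact congrArg Sigma.fst (Finset.mem_singleton.1 hEq)
        have h2 : yr = xr := by
          rcases Finset.mem_insert.1 hmy with hEq | hEq
          · exact congrArg Sigma.fst hEq
          · exact congrArg Sigma.fst (Finset.mem_singleton.1 hEq)
        rw [h1, ← h2] at hylt
        exact lt_irrefl _ hylt
      · simp only [dif_neg hc2x] at hf
        exact Finset.insert_ne_empty _ _ hf.symm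
    · -- both join-type
      have hc2x : C2 ⟨xr, xm⟩ := (hC1orC2 _ hx).resolve_left hc1x
      have hc2y : C2 ⟨yr, ym⟩ := (hC1orC2 _ hy).resolve_left hc1y
      obtain ⟨hxp1, hxp2, hxd1, hxd2, hxne, hxsup0⟩ := hc2x.choose_spec
      obtain ⟨hyp1, hyp2, hyd1, hyd2, hyne, hysup0⟩ := hc2y.choose_spec
      set a := hc2x.choose.1
      set b := hc2x.choose.2
      set c := hc2y.choose.1
      set d := hc2y.choose.2
      have hxsup : a ⊔ b = xm := hxsup0
      have hysup : c ⊔ d = ym := hysup0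
      rw [hfdef] at hf
      simp only [dif_neg hc1x, dif_neg hc1y, dif_pos hc2x, dif_pos hc2y] at hf
      have hma : (⟨xr, a⟩ : Σ _ : Fin t, (Fin n →₀ ℕ)) ∈
          ({⟨yr, c⟩, ⟨yr, d⟩} : Finset (Σ _ : Fin t, (Fin n →₀ ℕ))) := by
        rw [← hf]; simp; exact Or.inl rfl
      have hrr : xr = yr := by
        rcases Finset.mem_insert.1 hma with hEq | hEq
        · exact congrArg Sigma.fst hEq
        · exact congrArg Sigma.fst (Finset.mem_singleton.1 hEq)
      subst hrr
      have hmb : (⟨xr, b⟩ : Σ _ : Fin t, (Fin n →₀ ℕ)) ∈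
          ({⟨xr, c⟩, ⟨xr, d⟩} : Finset (Σ _ : Fin t, (Fin n →₀ ℕ))) := by
        rw [← hf]; simp; exact Or.inr rfl
      have ha : a = c ∨ a = d := by
        rcases Finset.mem_insert.1 hma with hEq | hEq
        · exact Or.inl (sig_snd hEq)
        · exact Or.inr (sig_snd (Finset.mem_singleton.1 hEq))
      have hb : b = c ∨ b = d := by
        rcases Finset.mem_insert.1 hmb with hEq | hEq
        · exact Or.inl (sig_snd hEq)
        · exact Or.inr (sig_snd (Finset.mem_singleton.1 hEq))
      have hmm : xm = ym := by
        rw [← hxsup, ← hysup]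
        rcases ha with h | h <;> rcases hb with h' | h'
        · exact absurd (h.trans h'.symm) hxne
        · rw [h, h']
        · rw [h, h', sup_comm]
        · exact absurd (h.trans h'.symm) hxne
      rw [hmm]


lemma choose_succ_le (h N : ℕ) (h1 : 1 ≤ h) :
    (N + h).choose (h - 1) ≤ h * ((N + h - 1).choose (h - 1)) := by
  have key := Nat.choose_mul_succ_eq (N + h - 1) (h - 1)
  have e1 : N + h - 1 + 1 = N + h := by omega
  have e2 : N + h - (h - 1) = N + 1 := by omega
  rw [e1, e2] at key
  have hhN : N ≤ h * N := Nat.le_mul_of_pos_left N h1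
  have hexp : h * (N + 1) = h * N + h := by ring
  have hfac : N + h ≤ h * (N + 1) := by omega
  have : (N + h).choose (h - 1) * (N + 1) ≤ (h * ((N + h - 1).choose (h - 1))) * (N + 1) := by
    calc (N + h).choose (h - 1) * (N + 1) = (N + h - 1).choose (h - 1) * (N + h) := key.symm
    _ ≤ (N + h - 1).choose (h - 1) * (h * (N + 1)) := Nat.mul_le_mul_left _ hfac
    _ = (h * ((N + h - 1).choose (h - 1))) * (N + 1) := by ring
  exact Nat.le_of_mul_le_mul_right this (Nat.succ_pos N)

lemma two_mul_choose_two (m : ℕ) : 2 * Nat.choose m 2 + m = m * m := by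
  induction m with
  | zero => simp
  | succ p ih =>
    rw [Nat.choose_succ_succ, Nat.choose_one_right]
    have hsq : (p + 1) * (p + 1) = p * p + 2 * p + 1 := by ring
    rw [hsq]
    linarith [ih]

lemma sum_fin_val (t : ℕ) : ∑ s : Fin t, (s : ℕ) = Nat.choose t 2 := by
  have h1 : (∑ i ∈ Finset.range t, i) * 2 = t * (t - 1) := Finset.sum_range_id_mul_two t
  have h2 : 2 * Nat.choose t 2 + t = t * t := two_mul_choose_two t
  have h3 : t * t = t * (t - 1) + t := by
    cases t with
    | zero => simp
    | succ p => have : (p+1) * (p+1) = (p+1) * p + (p+1) := by ring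
                simpa using this
  have h4 : ∑ s : Fin t, (s : ℕ) = ∑ i ∈ Finset.range t, i :=
    Fin.sum_univ_eq_sum_range (fun i => i) t
  omega

lemma card_filter_lt {N : ℕ} (x : Fin N) :
    (Finset.univ.filter (fun s : Fin N => s < x)).card = (x : ℕ) := by
  have h : (Finset.univ.filter (fun s : Fin N => s < x)) = Finset.Iio x := by
    ext s
    simp only [Finset.mem_filter, Finset.mem_univ, true_and, Finset.mem_Iio]
  rw [h, Fin.card_Iio]

lemma filter_lt_castAdd (t₁ t₂ : ℕ) (r : Fin t₁) :
    (Finset.univ.filter (fun s : Fin (t₁ + t₂) => s < Fin.castAdd t₂ r)) =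
      (Finset.univ.filter (fun s : Fin t₁ => s < r)).map (Fin.castAddEmb t₂) := by
  ext s
  simp only [Finset.mem_filter, Finset.mem_univ, true_and, Finset.mem_map]
  constructor
  · intro hs
    have hlt : (s : ℕ) < (r : ℕ) := hs
    refine ⟨⟨(s : ℕ), by omega⟩, ?_, ?_⟩
    · simpa [Fin.lt_def] using hlt
    · ext
      simp
  · rintro ⟨a, ha, rfl⟩
    have h2 : (a : ℕ) < (r : ℕ) := ha
    have hv : ((Fin.castAddEmb t₂ a : Fin (t₁ + t₂)) : ℕ) = (a : ℕ) := rfl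
    rw [Fin.lt_def, hv]
    exact h2

lemma Mset_castAdd {t₁ t₂ : ℕ} (μ₁ : Fin t₁ → (Fin n →₀ ℕ)) (μ₂ : Fin t₂ → (Fin n →₀ ℕ))
    (r : Fin t₁) :
    Mset (Fin.append μ₁ μ₂) (Fin.castAdd t₂ r) = Mset μ₁ r := by
  classical
  unfold Mset
  rw [filter_lt_castAdd]
  ext m
  simp only [Finset.mem_image, Finset.mem_powerset]
  constructor
  · rintro ⟨A, hA, rfl⟩
    obtain ⟨u, hu, rfl⟩ := Finset.subset_map_iff.1 hA
    refine ⟨u, hu, ?_⟩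
    rw [Finset.sup_map]
    have h1 : u.sup ((Fin.append μ₁ μ₂) ∘ (Fin.castAddEmb t₂)) = u.sup μ₁ :=
      Finset.sup_congr rfl (fun i _ => Fin.append_left μ₁ μ₂ i)
    rw [h1, Fin.append_left]
  · rintro ⟨u, hu, rfl⟩
    refine ⟨u.map (Fin.castAddEmb t₂), Finset.map_subset_map.2 hu, ?_⟩
    rw [Finset.sup_map]
    have h1 : u.sup ((Fin.append μ₁ μ₂) ∘ (Fin.castAddEmb t₂)) = u.sup μ₁ :=
      Finset.sup_congr rfl (fun i _ => Fin.append_left μ₁ μ₂ i)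
    rw [h1, Fin.append_left]


/-- The set of degree-`j+1` lcm elements in a row injects into predecessors. -/
lemma filter_succ_subset_image {t : ℕ} (e : Fin t → ℕ) (μ : Fin t → (Fin n →₀ ℕ))
    (r : Fin t) (j : ℕ) (hrow : dg (μ r) + e r = j) :
    (Mset μ r).filter (fun m => dg m + e r = j + 1) ⊆
      (Finset.univ.filter (fun s : Fin t => s < r)).image (fun i => μ i ⊔ μ r) := by
  classical
  intro m hm
  obtain ⟨hmem, hd⟩ := Finset.mem_filter.1 hm
  obtain ⟨A, hA, rfl⟩ := mem_Mset.1 hmem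
  set m := A.sup μ ⊔ μ r with hmdef
  have hmne : m ≠ μ r := by
    intro hEq
    rw [hEq] at hd
    omega
  have hμrle : μ r ≤ m := le_sup_right
  have hex : ∃ c, μ r c < m c := by
    by_contra hco
    push_neg at hco
    exact hmne (le_antisymm (Finsupp.le_def.mpr hco) hμrle)
  obtain ⟨c, hc⟩ := hex
  have hAne : A.Nonempty := by
    rcases Finset.eq_empty_or_nonempty A with rfl | hne
    · exfalso
      apply hmne
      rw [hmdef, Finset.sup_empty]
      exact bot_sup_eq _
    · exact hne
  have hsupc : (A.sup μ) c = m c := by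
    have h1 : m c = (A.sup μ) c ⊔ (μ r) c := by rw [hmdef, Finsupp.sup_apply]
    have h2 : (A.sup μ) c ⊔ (μ r) c = max ((A.sup μ) c) ((μ r) c) := rfl
    rw [h2] at h1
    omega
  obtain ⟨i, hiA, hieq⟩ := Finset.exists_mem_eq_sup A hAne (fun i => μ i c)
  have hic : μ i c = m c := by
    rw [← hieq, ← finset_sup_apply, hsupc]
  have hir : i < r := by
    have := hA hiA; simpa using this
  have hwle : μ i ⊔ μ r ≤ m := sup_le ((Finset.le_sup hiA).trans le_sup_left) hμrle
  have hwne : μ i ⊔ μ r ≠ μ r := by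
    intro hEq
    have h2 : (μ i ⊔ μ r) c = μ r c := by rw [hEq]
    rw [Finsupp.sup_apply] at h2
    have h3 : (μ i) c ⊔ (μ r) c = max ((μ i) c) ((μ r) c) := rfl
    rw [h3] at h2
    omega
  have hdglt : dg (μ r) < dg (μ i ⊔ μ r) := dg_lt_of_lt le_sup_right (fun hEq => hwne hEq.symm)
  have hdgle : dg (μ i ⊔ μ r) ≤ dg m := dg_mono hwle
  have hweq : μ i ⊔ μ r = m := eq_of_le_of_dg_le hwle (by omega)
  exact Finset.mem_image.2 ⟨i, by simpa using hir, hweq⟩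

/-- Γ₂ row bound. -/
lemma row2_bound (h : ℕ) (h1 : 1 ≤ h) {t : ℕ} (e : Fin t → ℕ) (μ : Fin t → (Fin n →₀ ℕ))
    (r : Fin t) (j : ℕ) (hrow : dg (μ r) + e r = j) :
    ∑ m ∈ Mset μ r, (if dg m + e r ≤ j + 1 then
        Nat.choose (j + 1 - (dg m + e r) + h - 1) (h - 1) else 0) ≤
      h + (Finset.univ.filter (fun s : Fin t => s < r)).card := by
  classical
  rw [← Finset.sum_filter]
  have hsub : (Mset μ r).filter (fun m => dg m + e r ≤ j + 1) ⊆
      insert (μ r) ((Mset μ r).filter (fun m => dg m + e r = j + 1)) := by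
    intro m hm
    obtain ⟨hmem, hd⟩ := Finset.mem_filter.1 hm
    have hge : dg (μ r) ≤ dg m := dg_mono (le_of_mem_Mset hmem)
    rcases Nat.lt_or_ge (dg m + e r) (j + 1) with hlt | hge2
    · -- d ≤ j hence d = j hence m = μ r
      have : dg m ≤ dg (μ r) := by omega
      have := eq_of_le_of_dg_le (le_of_mem_Mset hmem) this
      rw [← this]
      exact Finset.mem_insert_self _ _
    · exact Finset.mem_insert_of_mem (Finset.mem_filter.2 ⟨hmem, by omega⟩)
  calc ∑ m ∈ (Mset μ r).filter (fun m => dg m + e r ≤ j + 1),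
        Nat.choose (j + 1 - (dg m + e r) + h - 1) (h - 1)
      ≤ ∑ m ∈ insert (μ r) ((Mset μ r).filter (fun m => dg m + e r = j + 1)),
        Nat.choose (j + 1 - (dg m + e r) + h - 1) (h - 1) := by
        exact Finset.sum_le_sum_of_subset_of_nonneg hsub (fun _ _ _ => Nat.zero_le _)
    _ ≤ h + (Finset.univ.filter (fun s : Fin t => s < r)).card := by
        rw [Finset.sum_insert (by
          intro hmem
          have := (Finset.mem_filter.1 hmem).2
          omega)]
        have hterm : Nat.choose (j + 1 - (dg (μ r) + e (r)) + h - 1) (h - 1) = h := by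
          have e1 : j + 1 - (dg (μ r) + e r) + h - 1 = h := by omega
          rw [e1]
          have e2 : h - (h - 1) = 1 := by omega
          rw [← Nat.choose_symm (by omega : h - 1 ≤ h), e2, Nat.choose_one_right]
        rw [hterm]
        have hsum1 : ∑ m ∈ (Mset μ r).filter (fun m => dg m + e r = j + 1),
            Nat.choose (j + 1 - (dg m + e r) + h - 1) (h - 1) =
            ((Mset μ r).filter (fun m => dg m + e r = j + 1)).card := by
          rw [Finset.card_eq_sum_ones]
          refine Finset.sum_congr rfl (fun m hm => ?_)
          have hd := (Finset.mem_filter.1 hm).2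
          have e1 : j + 1 - (dg m + e r) + h - 1 = h - 1 := by omega
          rw [e1, Nat.choose_self]
        rw [hsum1]
        have hcard : ((Mset μ r).filter (fun m => dg m + e r = j + 1)).card ≤
            (Finset.univ.filter (fun s : Fin t => s < r)).card := by
          refine le_trans (Finset.card_le_card
            (filter_succ_subset_image e μ r j hrow)) ?_
          exact Finset.card_image_le
        omega

/-- Γ₁ rows bound at level `j+1`. -/
lemma rows1_bound (h : ℕ) (h1 : 1 ≤ h) {t : ℕ} (e : Fin t → ℕ) (μ : Fin t → (Fin n →₀ ℕ))
    (j : ℕ) :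
    ∑ r : Fin t, ∑ m ∈ Mset μ r, (if dg m + e r ≤ j + 1 then
        Nat.choose (j + 1 - (dg m + e r) + h - 1) (h - 1) else 0) ≤
      h * (∑ r : Fin t, ∑ m ∈ Mset μ r, (if dg m + e r ≤ j then
        Nat.choose (j - (dg m + e r) + h - 1) (h - 1) else 0)) +
      ∑ r : Fin t, ((Mset μ r).filter (fun m => dg m + e r = j + 1)).card := by
  classical
  rw [Finset.mul_sum, ← Finset.sum_add_distrib]
  refine Finset.sum_le_sum (fun r _ => ?_)
  rw [← Finset.sum_filter_add_sum_filter_not (Mset μ r) (fun m => dg m + e r ≤ j)]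
  have part1 : ∑ m ∈ (Mset μ r).filter (fun m => dg m + e r ≤ j),
      (if dg m + e r ≤ j + 1 then
        Nat.choose (j + 1 - (dg m + e r) + h - 1) (h - 1) else 0) ≤
      h * ∑ m ∈ Mset μ r, (if dg m + e r ≤ j then
        Nat.choose (j - (dg m + e r) + h - 1) (h - 1) else 0) := by
    calc ∑ m ∈ (Mset μ r).filter (fun m => dg m + e r ≤ j),
          (if dg m + e r ≤ j + 1 then
            Nat.choose (j + 1 - (dg m + e r) + h - 1) (h - 1) else 0)
        = ∑ m ∈ (Mset μ r).filter (fun m => dg m + e r ≤ j),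
            Nat.choose (j + 1 - (dg m + e r) + h - 1) (h - 1) := by
          refine Finset.sum_congr rfl (fun m hm => ?_)
          have hd := (Finset.mem_filter.1 hm).2
          exact if_pos (by omega)
      _ ≤ ∑ m ∈ (Mset μ r).filter (fun m => dg m + e r ≤ j),
            h * Nat.choose (j - (dg m + e r) + h - 1) (h - 1) := by
          refine Finset.sum_le_sum (fun m hm => ?_)
          have hd := (Finset.mem_filter.1 hm).2
          have e1 : j + 1 - (dg m + e r) + h - 1 = (j - (dg m + e r)) + h := by omega
          rw [e1]
          exact choose_succ_le h (j - (dg m + e r)) h1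
      _ = h * ∑ m ∈ (Mset μ r).filter (fun m => dg m + e r ≤ j),
            Nat.choose (j - (dg m + e r) + h - 1) (h - 1) := (Finset.mul_sum _ _ _).symm
      _ = h * ∑ m ∈ Mset μ r, (if dg m + e r ≤ j then
            Nat.choose (j - (dg m + e r) + h - 1) (h - 1) else 0) := by
          rw [Finset.sum_filter]
  have part2 : ∑ m ∈ (Mset μ r).filter (fun m => ¬ dg m + e r ≤ j),
      (if dg m + e r ≤ j + 1 then
        Nat.choose (j + 1 - (dg m + e r) + h - 1) (h - 1) else 0) ≤
      ((Mset μ r).filter (fun m => dg m + e r = j + 1)).card := by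
    have hpt : ∀ m ∈ (Mset μ r).filter (fun m => ¬ dg m + e r ≤ j),
        (if dg m + e r ≤ j + 1 then
          Nat.choose (j + 1 - (dg m + e r) + h - 1) (h - 1) else 0) ≤
        (if dg m + e r = j + 1 then 1 else 0) := by
      intro m hm
      have hd := (Finset.mem_filter.1 hm).2
      by_cases hle : dg m + e r ≤ j + 1
      · have heq : dg m + e r = j + 1 := by omega
        rw [if_pos hle, if_pos heq]
        have e1 : j + 1 - (dg m + e r) + h - 1 = h - 1 := by omega
        rw [e1, Nat.choose_self]
      · rw [if_neg hle, if_neg (by omega)]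
    calc ∑ m ∈ (Mset μ r).filter (fun m => ¬ dg m + e r ≤ j),
          (if dg m + e r ≤ j + 1 then
            Nat.choose (j + 1 - (dg m + e r) + h - 1) (h - 1) else 0)
        ≤ ∑ m ∈ (Mset μ r).filter (fun m => ¬ dg m + e r ≤ j),
            (if dg m + e r = j + 1 then 1 else 0) := Finset.sum_le_sum hpt
      _ = (((Mset μ r).filter (fun m => ¬ dg m + e r ≤ j)).filter
            (fun m => dg m + e r = j + 1)).card := by rw [Finset.sum_boole]; simp
      _ ≤ ((Mset μ r).filter (fun m => dg m + e r = j + 1)).card := by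
          refine Finset.card_le_card ?_
          refine Finset.filter_subset_filter _ (Finset.filter_subset _ _)
  omega


lemma card_le_sum_wt (h : ℕ) (h1 : 1 ≤ h) {t : ℕ} (e : Fin t → ℕ)
    (μ : Fin t → (Fin n →₀ ℕ)) (j : ℕ) :
    ∑ r : Fin t, ((Mset μ r).filter (fun m => dg m + e r ≤ j)).card ≤
      ∑ r : Fin t, ∑ m ∈ Mset μ r, (if dg m + e r ≤ j then
        Nat.choose (j - (dg m + e r) + h - 1) (h - 1) else 0) := by
  refine Finset.sum_le_sum (fun r _ => ?_)
  rw [← Finset.sum_filter, Finset.card_eq_sum_ones]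
  refine Finset.sum_le_sum (fun m hm => ?_)
  exact Nat.succ_le_of_lt (Nat.choose_pos (by omega))

lemma t_le_sum_wt (h : ℕ) (h1 : 1 ≤ h) {t : ℕ} (e : Fin t → ℕ)
    (μ : Fin t → (Fin n →₀ ℕ)) (j : ℕ) (hbase : ∀ r, dg (μ r) + e r ≤ j) :
    t ≤ ∑ r : Fin t, ∑ m ∈ Mset μ r, (if dg m + e r ≤ j then
      Nat.choose (j - (dg m + e r) + h - 1) (h - 1) else 0) := by
  have : ∀ r : Fin t, 1 ≤ ∑ m ∈ Mset μ r, (if dg m + e r ≤ j then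
      Nat.choose (j - (dg m + e r) + h - 1) (h - 1) else 0) := by
    intro r
    refine le_trans ?_ (Finset.single_le_sum (f := fun m => (if dg m + e r ≤ j then
      Nat.choose (j - (dg m + e r) + h - 1) (h - 1) else 0))
      (fun _ _ => Nat.zero_le _) (self_mem_Mset μ r))
    rw [if_pos (hbase r)]
    exact Nat.succ_le_of_lt (Nat.choose_pos (by omega))
  calc t = ∑ _r : Fin t, 1 := by simp
    _ ≤ _ := Finset.sum_le_sum (fun r _ => this r)

lemma sum_pred (h t₁ t₂ : ℕ) :
    ∑ s : Fin t₂, (h + (t₁ + (s : ℕ))) = t₂ * h + t₂ * t₁ + Nat.choose t₂ 2 := by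
  rw [Finset.sum_add_distrib, Finset.sum_add_distrib, Finset.sum_const, Finset.sum_const,
    sum_fin_val]
  simp only [Finset.card_univ, Fintype.card_fin, smul_eq_mul]
  ring


lemma lamDim_eq {n : ℕ} (h : ℕ) {t : ℕ} (e : Fin t → ℕ) (μ : Fin t → (Fin n →₀ ℕ)) (N : ℕ) :
    lamDim h e μ N = ∑ r : Fin t, ∑ m ∈ Mset μ r,
      (if dg m + e r ≤ N then Nat.choose (N - (dg m + e r) + h - 1) (h - 1) else 0) := rfl

end LC

/-- **Lemma 3.1 (λ-count).** Fix `1 ≤ h < n`. Let `Γ₁` be a list of `ℕ × ℕ^(n-h)`-homogeneous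
polynomials `γ_r = γ̄₁_r · X^(μ₁_r)` of `S = k[x_1,…,x_n]`, each of total degree at most `j - 1`,
and let `Γ₂` be a list of `ℕ × ℕ^(n-h)`-homogeneous polynomials of total degree exactly `j`,
with `|Γ₂| ≤ λ_j(Γ₁)`. Let `Γ` be the list obtained by appending `Γ₂` to `Γ₁`. Then
`λ_{j+1}(Γ) ≤ 2·λ_j(Γ₁)² + (2h − 1)·λ_j(Γ₁)`. -/
theorem lambda_count
    (k : Type) [Field k] (n h : ℕ) (h1 : 1 ≤ h) (hn : h < n)
    (t₁ t₂ : ℕ)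
    (γbar₁ : Fin t₁ → MvPolynomial (Fin n) k) (e₁ : Fin t₁ → ℕ)
    (μ₁ : Fin t₁ → (Fin n →₀ ℕ))
    (γbar₂ : Fin t₂ → MvPolynomial (Fin n) k) (e₂ : Fin t₂ → ℕ)
    (μ₂ : Fin t₂ → (Fin n →₀ ℕ))
    (j : ℕ)
    (h1hom : ∀ r, (γbar₁ r).IsHomogeneous (e₁ r)) (h1ne : ∀ r, γbar₁ r ≠ 0)
    (h1vars : ∀ r, ∀ m ∈ (γbar₁ r).support, ∀ i : Fin n, m i ≠ 0 → (i : ℕ) < h)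
    (h1μvars : ∀ r, ∀ i : Fin n, μ₁ r i ≠ 0 → h ≤ (i : ℕ))
    (h1deg : ∀ r, e₁ r + (μ₁ r).sum (fun _ v => v) + 1 ≤ j)
    (h2hom : ∀ r, (γbar₂ r).IsHomogeneous (e₂ r)) (h2ne : ∀ r, γbar₂ r ≠ 0)
    (h2vars : ∀ r, ∀ m ∈ (γbar₂ r).support, ∀ i : Fin n, m i ≠ 0 → (i : ℕ) < h)
    (h2μvars : ∀ r, ∀ i : Fin n, μ₂ r i ≠ 0 → h ≤ (i : ℕ))
    (h2deg : ∀ r, e₂ r + (μ₂ r).sum (fun _ v => v) = j)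
    (hcard : t₂ ≤ lamDim h e₁ μ₁ j) :
    lamDim h (Fin.append e₁ e₂) (Fin.append μ₁ μ₂) (j + 1) ≤
      2 * lamDim h e₁ μ₁ j ^ 2 + (2 * h - 1) * lamDim h e₁ μ₁ j := by
  classical
  have hlam1 : lamDim h e₁ μ₁ j = ∑ r : Fin t₁, ∑ m ∈ LC.Mset μ₁ r,
      (if LC.dg m + e₁ r ≤ j then Nat.choose (j - (LC.dg m + e₁ r) + h - 1) (h - 1) else 0) :=
    LC.lamDim_eq h e₁ μ₁ j
  have hbase1 : ∀ r, LC.dg (μ₁ r) + e₁ r ≤ j := by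
    intro r
    have := h1deg r
    unfold LC.dg
    omega
  conv_lhs => rw [LC.lamDim_eq]
  rw [Fin.sum_univ_add]
  simp only [LC.Mset_castAdd, Fin.append_left]
  set Λ := lamDim h e₁ μ₁ j with hΛ
  -- Γ₁ part
  have hpart1 : ∑ r : Fin t₁, ∑ m ∈ LC.Mset μ₁ r,
      (if LC.dg m + e₁ r ≤ j + 1 then
        Nat.choose (j + 1 - (LC.dg m + e₁ r) + h - 1) (h - 1) else 0) ≤
      h * Λ + Nat.choose Λ 2 := by
    refine le_trans (LC.rows1_bound h h1 e₁ μ₁ j) ?_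
    have hcount := LC.count_bound e₁ μ₁ j hbase1
    have hc2 : ∑ r : Fin t₁, ((LC.Mset μ₁ r).filter (fun m => LC.dg m + e₁ r ≤ j)).card ≤ Λ := by
      rw [hlam1]
      exact LC.card_le_sum_wt h h1 e₁ μ₁ j
    have hc3 : ∑ r : Fin t₁, ((LC.Mset μ₁ r).filter
        (fun m => LC.dg m + e₁ r = j + 1)).card ≤ Nat.choose Λ 2 :=
      le_trans hcount (Nat.choose_le_choose 2 hc2)
    have hc4 : h * (∑ r : Fin t₁, ∑ m ∈ LC.Mset μ₁ r, (if LC.dg m + e₁ r ≤ j then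
        Nat.choose (j - (LC.dg m + e₁ r) + h - 1) (h - 1) else 0)) = h * Λ := by
      rw [hlam1]
    omega
  -- Γ₂ part
  have hpart2 : ∑ s : Fin t₂, ∑ m ∈ LC.Mset (Fin.append μ₁ μ₂) (Fin.natAdd t₁ s),
      (if LC.dg m + (Fin.append e₁ e₂) (Fin.natAdd t₁ s) ≤ j + 1 then
        Nat.choose (j + 1 - (LC.dg m + (Fin.append e₁ e₂) (Fin.natAdd t₁ s)) + h - 1)
          (h - 1) else 0) ≤ t₂ * h + t₂ * t₁ + Nat.choose t₂ 2 := by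
    rw [← LC.sum_pred h t₁ t₂]
    refine Finset.sum_le_sum (fun s _ => ?_)
    have hrow : LC.dg ((Fin.append μ₁ μ₂) (Fin.natAdd t₁ s)) +
        (Fin.append e₁ e₂) (Fin.natAdd t₁ s) = j := by
      rw [Fin.append_right, Fin.append_right]
      have := h2deg s
      unfold LC.dg
      omega
    refine le_trans (LC.row2_bound h h1 (Fin.append e₁ e₂) (Fin.append μ₁ μ₂)
      (Fin.natAdd t₁ s) j hrow) ?_
    rw [LC.card_filter_lt]
    simp
  -- arithmetic
  have f3 : t₁ ≤ Λ := by
    rw [hlam1]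
    exact LC.t_le_sum_wt h h1 e₁ μ₁ j hbase1
  have f4 : t₂ ≤ Λ := hcard
  have f5 : 2 * Nat.choose Λ 2 + Λ = Λ * Λ := LC.two_mul_choose_two Λ
  have f6 : Nat.choose t₂ 2 ≤ Nat.choose Λ 2 := Nat.choose_le_choose 2 f4
  have g1 : Λ ^ 2 = Λ * Λ := sq Λ
  have hh : 2 * h - 1 + 1 = 2 * h := by omega
  have g2 : (2 * h - 1) * Λ + Λ = 2 * (h * Λ) := by
    have e1 : (2 * h - 1) * Λ + Λ = (2 * h - 1 + 1) * Λ := by ring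
    rw [e1, hh]
    ring
  have g3 : t₂ * t₁ ≤ Λ * Λ := Nat.mul_le_mul f4 f3
  have g4 : t₂ * h ≤ h * Λ := by
    calc t₂ * h = h * t₂ := mul_comm _ _
      _ ≤ h * Λ := Nat.mul_le_mul_left h f4
  linarith [hpart1, hpart2, f5, f6, g1, g2, g3, g4]
end
end

section
/- Let S = k[x_1,...,x_n], ω = (ω_1,...,ω_n) ∈ ℕ^n a weight, and S̃ = S[y] bigraded by deg(x_i) = (1, ω_i) and deg(y) = (0,1). Let f_1,...,f_t ∈ S̃ \ (y)S̃ be bi-homogeneous elements and I = (f_1,...,f_t). Then for any bi-homogeneous element f ∈ S̃ there exists a bi-homogeneous element g ∈ S̃ such that (I, f) : y^∞ = (I, g) : y^∞, and either g = 0, or deg_x(g) = deg_x(f) and the image of g under the evaluation y ↦ 0 does not belong to the image of I under the evaluation y ↦ 0. -/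
open MvPolynomial

noncomputable section

/-- An element of `S̃ = S[y]` (with `S = k[x_1,…,x_n]`) is bi-homogeneous of bidegree `(a, w)`
with respect to the weight `ω ∈ ℕⁿ` if every monomial `X^u y^b` occurring in it satisfies
`|u| = a` and `ω·u + b = w` (so `deg(x_i) = (1, ω_i)` and `deg(y) = (0,1)`). -/
def IsBiHomogeneous {k : Type} [Field k] {n : ℕ} (ω : Fin n → ℕ)
    (F : Polynomial (MvPolynomial (Fin n) k)) (a w : ℕ) : Prop :=
  ∀ b : ℕ, ∀ m ∈ (F.coeff b).support, (∑ i, m i) = a ∧ (∑ i, ω i * m i) + b = w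

/-- The total degree of `F ∈ S[y]` in the variables `x_1,…,x_n`. -/
def degX {k : Type} [Field k] {n : ℕ} (F : Polynomial (MvPolynomial (Fin n) k)) : ℕ :=
  F.support.sup fun b => (F.coeff b).totalDegree

/-- The saturation `J : y^∞ = ⋃_N (J : y^N)` of an ideal of `S̃ = S[y]`. -/
def ySat {k : Type} [Field k] {n : ℕ} (J : Ideal (Polynomial (MvPolynomial (Fin n) k))) :
    Ideal (Polynomial (MvPolynomial (Fin n) k)) :=
  ⨆ N : ℕ, Submodule.colon J
    (Ideal.span {(Polynomial.X : Polynomial (MvPolynomial (Fin n) k)) ^ N})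

section Helpers

variable {k : Type} [Field k] {n : ℕ}


def Wpair (ω : Fin n → ℕ) : Fin n → ℤ × ℤ := fun i => ((1 : ℤ), (ω i : ℤ))

lemma weight_Wpair (ω : Fin n → ℕ) (m : Fin n →₀ ℕ) :
    Finsupp.weight (Wpair ω) m = (((∑ i, m i : ℕ) : ℤ), ((∑ i, ω i * m i : ℕ) : ℤ)) := by
  rw [Finsupp.weight_apply, Finsupp.sum_fintype _ _ (fun i => by simp)]
  rw [Prod.ext_iff]
  constructor
  · rw [Prod.fst_sum]
    push_cast
    exact Finset.sum_congr rfl fun i _ => by simp [Wpair]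
  · rw [Prod.snd_sum]
    push_cast
    exact Finset.sum_congr rfl fun i _ => by simp [Wpair, mul_comm]

lemma IsBiHomogeneous.coeff_isWeightedHomogeneous {ω : Fin n → ℕ}
    {F : Polynomial (MvPolynomial (Fin n) k)} {a w : ℕ}
    (hF : IsBiHomogeneous ω F a w) (b : ℕ) :
    IsWeightedHomogeneous (Wpair ω) (F.coeff b) ((a : ℤ), (w : ℤ) - (b : ℤ)) := by
  intro m hm
  obtain ⟨h1, h2⟩ := hF b m (mem_support_iff.mpr hm)
  rw [weight_Wpair, Prod.ext_iff]
  exact ⟨by exact_mod_cast congrArg _ h1, by omega⟩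

lemma isBiHomogeneous_of_coeff {ω : Fin n → ℕ}
    {F : Polynomial (MvPolynomial (Fin n) k)} {a w : ℕ}
    (h : ∀ b : ℕ, IsWeightedHomogeneous (Wpair ω) (F.coeff b) ((a : ℤ), (w : ℤ) - (b : ℤ))) :
    IsBiHomogeneous ω F a w := by
  intro b m hm
  have := h b (mem_support_iff.mp hm)
  rw [weight_Wpair, Prod.mk.injEq] at this
  obtain ⟨h1, h2⟩ := this
  exact ⟨by exact_mod_cast h1, by omega⟩

/-- The bihomogeneous component of bidegree `(a, w)`. -/
def bihomComp (ω : Fin n → ℕ) (a w : ℕ) (H : Polynomial (MvPolynomial (Fin n) k)) :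
    Polynomial (MvPolynomial (Fin n) k) :=
  ∑ b ∈ H.support, Polynomial.monomial b
    (weightedHomogeneousComponent (Wpair ω) ((a : ℤ), (w : ℤ) - (b : ℤ)) (H.coeff b))

lemma bihomComp_coeff (ω : Fin n → ℕ) (a w : ℕ) (H : Polynomial (MvPolynomial (Fin n) k))
    (b : ℕ) :
    (bihomComp ω a w H).coeff b =
      weightedHomogeneousComponent (Wpair ω) ((a : ℤ), (w : ℤ) - (b : ℤ)) (H.coeff b) := by
  rw [bihomComp, Polynomial.finset_sum_coeff]
  simp only [Polynomial.coeff_monomial]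
  rw [Finset.sum_ite_eq' H.support b]
  split_ifs with hb
  · rfl
  · rw [Polynomial.notMem_support_iff.mp hb, map_zero]

lemma bihomComp_isBiHomogeneous (ω : Fin n → ℕ) (a w : ℕ)
    (H : Polynomial (MvPolynomial (Fin n) k)) :
    IsBiHomogeneous ω (bihomComp ω a w H) a w := by
  apply isBiHomogeneous_of_coeff
  intro b
  rw [bihomComp_coeff]
  exact weightedHomogeneousComponent_isWeightedHomogeneous _ _

lemma bihomComp_add (ω : Fin n → ℕ) (a w : ℕ)
    (H1 H2 : Polynomial (MvPolynomial (Fin n) k)) :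
    bihomComp ω a w (H1 + H2) = bihomComp ω a w H1 + bihomComp ω a w H2 := by
  ext b
  simp only [Polynomial.coeff_add, bihomComp_coeff, map_add]

lemma bihomComp_zero (ω : Fin n → ℕ) (a w : ℕ) :
    bihomComp ω a w (0 : Polynomial (MvPolynomial (Fin n) k)) = 0 := by
  ext b
  simp [bihomComp_coeff]

lemma bihomComp_sum (ω : Fin n → ℕ) (a w : ℕ) {ι : Type} (s : Finset ι)
    (φ : ι → Polynomial (MvPolynomial (Fin n) k)) :
    bihomComp ω a w (∑ i ∈ s, φ i) = ∑ i ∈ s, bihomComp ω a w (φ i) := by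
  classical
  induction s using Finset.induction_on with
  | empty => simp [bihomComp_zero]
  | insert _ _ hx ih => rw [Finset.sum_insert hx, Finset.sum_insert hx, bihomComp_add, ih]

lemma whc_mul_isWeightedHomogeneous {ω : Fin n → ℕ} (d e : ℤ × ℤ)
    (c g : MvPolynomial (Fin n) k) (hg : IsWeightedHomogeneous (Wpair ω) g e) :
    weightedHomogeneousComponent (Wpair ω) d (c * g) =
      weightedHomogeneousComponent (Wpair ω) (d - e) c * g := by
  induction c using MvPolynomial.induction_on' with
  | monomial u r =>
    have h1 : IsWeightedHomogeneous (Wpair ω) (monomial u r * g)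
        (Finsupp.weight (Wpair ω) u + e) :=
      (isWeightedHomogeneous_monomial _ _ _ rfl).mul hg
    have h2 : IsWeightedHomogeneous (Wpair ω) (monomial u r : MvPolynomial (Fin n) k)
        (Finsupp.weight (Wpair ω) u) := isWeightedHomogeneous_monomial _ _ _ rfl
    rw [weightedHomogeneousComponent_of_mem h1, weightedHomogeneousComponent_of_mem h2]
    by_cases hd : d = Finsupp.weight (Wpair ω) u + e
    · rw [if_pos hd, if_pos (by rw [hd, add_sub_cancel_right])]
    · rw [if_neg hd, if_neg (fun hc => hd (sub_eq_iff_eq_add.mp hc)), zero_mul]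
  | add p q hp hq =>
    rw [add_mul, map_add, map_add, hp, hq, add_mul]

lemma bihomComp_C_mul {ω : Fin n → ℕ} (a w : ℕ) (c : MvPolynomial (Fin n) k)
    {p : Polynomial (MvPolynomial (Fin n) k)} {ai wi : ℕ}
    (hp : IsBiHomogeneous ω p ai wi) :
    bihomComp ω a w (Polynomial.C c * p) =
      Polynomial.C (weightedHomogeneousComponent (Wpair ω)
        ((a : ℤ) - (ai : ℤ), (w : ℤ) - (wi : ℤ)) c) * p := by
  ext b
  rw [bihomComp_coeff, Polynomial.coeff_C_mul, Polynomial.coeff_C_mul,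
    whc_mul_isWeightedHomogeneous _ ((ai : ℤ), (wi : ℤ) - (b : ℤ)) c _
      (hp.coeff_isWeightedHomogeneous b),
    show ((a : ℤ), (w : ℤ) - (b : ℤ)) - ((ai : ℤ), (wi : ℤ) - (b : ℤ)) =
      ((a : ℤ) - (ai : ℤ), (w : ℤ) - (wi : ℤ)) from by
        rw [Prod.mk_sub_mk, Prod.mk.injEq]; exact ⟨rfl, by omega⟩]

lemma totalDegree_eq_of_biHom {p : MvPolynomial (Fin n) k} {a : ℕ}
    (hp : p ≠ 0) (h : ∀ m ∈ p.support, (∑ i, m i) = a) : p.totalDegree = a := by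
  have key : ∀ m ∈ p.support, (m.sum fun _ e => e) = a := by
    intro m hm
    rw [← h m hm]
    rw [Finsupp.sum_fintype _ _ (fun i => rfl)]
  apply le_antisymm
  · rw [MvPolynomial.totalDegree]
    exact Finset.sup_le fun m hm => le_of_eq (key m hm)
  · obtain ⟨m, hm⟩ := (support_nonempty.mpr hp)
    rw [← key m hm]
    exact le_totalDegree hm

lemma degX_eq_of_biHom {ω : Fin n → ℕ} {F : Polynomial (MvPolynomial (Fin n) k)} {a w : ℕ}
    (hF : IsBiHomogeneous ω F a w) (h0 : F ≠ 0) : degX F = a := by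
  have key : ∀ b ∈ F.support, (F.coeff b).totalDegree = a := fun b hb =>
    totalDegree_eq_of_biHom (Polynomial.mem_support_iff.mp hb)
      (fun m hm => (hF b m hm).1)
  apply le_antisymm
  · unfold degX
    exact Finset.sup_le fun b hb => le_of_eq (key b hb)
  · obtain ⟨b, hb⟩ := Polynomial.support_nonempty.mpr h0
    rw [← key b hb]
    unfold degX
    exact Finset.le_sup (f := fun b => (F.coeff b).totalDegree) hb

lemma IsBiHomogeneous.sub {ω : Fin n → ℕ} {F G : Polynomial (MvPolynomial (Fin n) k)}
    {a w : ℕ} (hF : IsBiHomogeneous ω F a w) (hG : IsBiHomogeneous ω G a w) :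
    IsBiHomogeneous ω (F - G) a w := by
  intro b m hm
  rw [Polynomial.coeff_sub, mem_support_iff, coeff_sub] at hm
  by_cases h1 : coeff m (F.coeff b) ≠ 0
  · exact hF b m (mem_support_iff.mpr h1)
  · push_neg at h1
    rw [h1, zero_sub, neg_ne_zero] at hm
    exact hG b m (mem_support_iff.mpr hm)

lemma colon_pow_mono (J : Ideal (Polynomial (MvPolynomial (Fin n) k))) {N M : ℕ}
    (h : N ≤ M) :
    Submodule.colon J (Ideal.span {(Polynomial.X : Polynomial (MvPolynomial (Fin n) k)) ^ N}) ≤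
    Submodule.colon J (Ideal.span {(Polynomial.X : Polynomial (MvPolynomial (Fin n) k)) ^ M}) := by
  intro p hp
  rw [Ideal.mem_colon_span_singleton] at hp ⊢
  have : (Polynomial.X : Polynomial (MvPolynomial (Fin n) k)) ^ M =
      Polynomial.X ^ N * Polynomial.X ^ (M - N) := by
    rw [← pow_add]
    congr 1
    omega
  rw [this, ← mul_assoc]
  exact Ideal.mul_mem_right _ _ hp

lemma mem_ySat {J : Ideal (Polynomial (MvPolynomial (Fin n) k))}
    {p : Polynomial (MvPolynomial (Fin n) k)} :
    p ∈ ySat J ↔ ∃ N : ℕ, Polynomial.X ^ N * p ∈ J := by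
  rw [ySat, Submodule.mem_iSup_of_directed _
    (fun N M => ⟨max N M, colon_pow_mono J (le_max_left N M),
      colon_pow_mono J (le_max_right N M)⟩)]
  simp_rw [Ideal.mem_colon_span_singleton, mul_comm]

lemma ySat_mono {J J' : Ideal (Polynomial (MvPolynomial (Fin n) k))} (h : J ≤ J') :
    ySat J ≤ ySat J' := by
  intro p hp
  rw [mem_ySat] at hp ⊢
  obtain ⟨N, hN⟩ := hp
  exact ⟨N, h hN⟩

lemma ySat_cancelX (I : Ideal (Polynomial (MvPolynomial (Fin n) k)))
    (G : Polynomial (MvPolynomial (Fin n) k)) :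
    ySat (I ⊔ Ideal.span {Polynomial.X * G}) = ySat (I ⊔ Ideal.span {G}) := by
  apply le_antisymm
  · apply ySat_mono
    apply sup_le_sup_left
    rw [Ideal.span_singleton_le_iff_mem]
    exact Ideal.mem_span_singleton.mpr (dvd_mul_left G Polynomial.X)
  · intro p hp
    rw [mem_ySat] at hp ⊢
    obtain ⟨N, hN⟩ := hp
    refine ⟨N + 1, ?_⟩
    obtain ⟨i, hi, z, hz, hsum⟩ := Submodule.mem_sup.mp hN
    obtain ⟨c, rfl⟩ := Ideal.mem_span_singleton'.mp hz
    have : Polynomial.X ^ (N + 1) * p = Polynomial.X * i + c * (Polynomial.X * G) := by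
      rw [pow_succ, mul_comm (Polynomial.X ^ N) Polynomial.X, mul_assoc, ← hsum]
      ring
    rw [this]
    exact Submodule.add_mem _ (Ideal.mem_sup_left (Ideal.mul_mem_left _ _ hi))
      (Ideal.mem_sup_right (Ideal.mul_mem_left _ _ (Ideal.subset_span rfl)))

lemma sup_span_eq_of_sub_mem (I : Ideal (Polynomial (MvPolynomial (Fin n) k)))
    {p q : Polynomial (MvPolynomial (Fin n) k)} (h : p - q ∈ I) :
    I ⊔ Ideal.span {p} = I ⊔ Ideal.span {q} := by
  have key : ∀ x y : Polynomial (MvPolynomial (Fin n) k), x - y ∈ I →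
      Ideal.span {x} ≤ I ⊔ Ideal.span {y} := by
    intro x y hxy
    rw [Ideal.span_singleton_le_iff_mem]
    have : x = (x - y) + y := by ring
    rw [this]
    exact Submodule.add_mem _ (Ideal.mem_sup_left hxy)
      (Ideal.mem_sup_right (Ideal.subset_span rfl))
  apply le_antisymm
  · exact sup_le le_sup_left (key p q h)
  · refine sup_le le_sup_left (key q p ?_)
    rw [← neg_sub]
    exact Submodule.neg_mem _ h


end Helpers

/-- **Lemma 2.2 (reduction lemma).** Let `f_1,…,f_t ∈ S̃ \ (y)S̃` be bi-homogeneous and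
`I = (f_1,…,f_t)`. For every bi-homogeneous `f ∈ S̃` there is a bi-homogeneous `g ∈ S̃`
with `(I,f) : y^∞ = (I,g) : y^∞`, and either `g = 0`, or `deg_x(g) = deg_x(f)` and the
image of `g` under `y ↦ 0` does not lie in the image of `I` under `y ↦ 0`. -/
theorem reduction_lemma_bihomogeneous
    (k : Type) [Field k] (n : ℕ) (ω : Fin n → ℕ) (t : ℕ)
    (f : Fin t → Polynomial (MvPolynomial (Fin n) k))
    (hbihom : ∀ i, ∃ a w : ℕ, IsBiHomogeneous ω (f i) a w)
    (hnoty : ∀ i, f i ∉ Ideal.span {(Polynomial.X : Polynomial (MvPolynomial (Fin n) k))})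
    (F : Polynomial (MvPolynomial (Fin n) k)) (a w : ℕ) (hF : IsBiHomogeneous ω F a w) :
    ∃ g : Polynomial (MvPolynomial (Fin n) k),
      (∃ a' w' : ℕ, IsBiHomogeneous ω g a' w') ∧
      ySat (Ideal.span (Set.range f) ⊔ Ideal.span {F}) =
        ySat (Ideal.span (Set.range f) ⊔ Ideal.span {g}) ∧
      (g = 0 ∨ (degX g = degX F ∧
        Polynomial.eval 0 g ∉
          Ideal.map (Polynomial.evalRingHom (0 : MvPolynomial (Fin n) k))
            (Ideal.span (Set.range f)))) := by
  classical
  choose af wf hfw using hbihom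
  induction w using Nat.strong_induction_on generalizing F with
  | _ w IH =>
  by_cases hF0 : F = 0
  · exact ⟨0, ⟨0, 0, fun b m hm => by simp at hm⟩, by rw [hF0], Or.inl rfl⟩
  by_cases hev : Polynomial.eval 0 F ∈
      Ideal.map (Polynomial.evalRingHom (0 : MvPolynomial (Fin n) k))
        (Ideal.span (Set.range f))
  · -- reduction step
    have hmap : Ideal.map (Polynomial.evalRingHom (0 : MvPolynomial (Fin n) k))
        (Ideal.span (Set.range f)) =
        Ideal.span (Set.range fun i => Polynomial.eval 0 (f i)) := by
      rw [Ideal.map_span, ← Set.range_comp]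
      rfl
    rw [hmap] at hev
    obtain ⟨c, hc⟩ := (Submodule.mem_span_range_iff_exists_fun _).mp hev
    set h0 : Polynomial (MvPolynomial (Fin n) k) := ∑ i, Polynomial.C (c i) * f i with hh0
    set h : Polynomial (MvPolynomial (Fin n) k) := bihomComp ω a w h0 with hh
    have hhI : h ∈ Ideal.span (Set.range f) := by
      rw [hh, hh0, bihomComp_sum]
      apply Ideal.sum_mem
      intro i _
      rw [bihomComp_C_mul a w (c i) (hfw i)]
      exact Ideal.mul_mem_left _ _ (Ideal.subset_span ⟨i, rfl⟩)
    have hcoeff0 : h.coeff 0 = F.coeff 0 := by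
      rw [hh, bihomComp_coeff]
      have e1 : h0.coeff 0 = F.coeff 0 := by
        rw [hh0, Polynomial.finset_sum_coeff]
        simp only [Polynomial.coeff_C_mul, Polynomial.coeff_zero_eq_eval_zero]
        simpa using hc
      rw [e1]
      exact (hF.coeff_isWeightedHomogeneous 0).weightedHomogeneousComponent_same
    have hG : IsBiHomogeneous ω (F - h) a w := hF.sub (bihomComp_isBiHomogeneous ω a w h0)
    have hXdvd : Polynomial.X ∣ (F - h) :=
      Polynomial.X_dvd_iff.mpr (by rw [Polynomial.coeff_sub, hcoeff0, sub_self])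
    obtain ⟨G', hG'⟩ := hXdvd
    by_cases hG'0 : G' = 0
    · have hFh : F = h := by
        have h1 : F - h = 0 := by rw [hG', hG'0, mul_zero]
        exact sub_eq_zero.mp h1
      refine ⟨0, ⟨0, 0, fun b m hm => by simp at hm⟩, ?_, Or.inl rfl⟩
      rw [sup_eq_left.mpr ((Ideal.span_singleton_le_iff_mem _).mpr (hFh ▸ hhI)),
        sup_eq_left.mpr ((Ideal.span_singleton_le_iff_mem _).mpr (Submodule.zero_mem _))]
    · have hcoeffG' : ∀ b : ℕ, G'.coeff b = (F - h).coeff (b + 1) := by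
        intro b
        rw [hG', Polynomial.coeff_X_mul]
      have hG'bi : IsBiHomogeneous ω G' a (w - 1) := by
        intro b m hm
        rw [hcoeffG'] at hm
        obtain ⟨h1, h2⟩ := hG (b + 1) m hm
        exact ⟨h1, by omega⟩
      have hw1 : 1 ≤ w := by
        obtain ⟨b, hb⟩ := Polynomial.support_nonempty.mpr hG'0
        obtain ⟨m, hm⟩ := support_nonempty.mpr (Polynomial.mem_support_iff.mp hb)
        rw [hcoeffG'] at hm
        obtain ⟨_, h2⟩ := hG (b + 1) m hm
        omega
      obtain ⟨g, hgbi, hgsat, hgor⟩ := IH (w - 1) (by omega) G' hG'bi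
      refine ⟨g, hgbi, ?_, ?_⟩
      · calc ySat (Ideal.span (Set.range f) ⊔ Ideal.span {F})
            = ySat (Ideal.span (Set.range f) ⊔ Ideal.span {Polynomial.X * G'}) := by
              rw [sup_span_eq_of_sub_mem _ (show F - Polynomial.X * G' ∈ _ from by
                rw [← hG']; simpa using hhI)]
          _ = ySat (Ideal.span (Set.range f) ⊔ Ideal.span {G'}) := ySat_cancelX _ _
          _ = _ := hgsat
      · rcases hgor with hg0 | ⟨hdeg, hnot⟩
        · exact Or.inl hg0
        · exact Or.inr ⟨by rw [hdeg, degX_eq_of_biHom hG'bi hG'0, degX_eq_of_biHom hF hF0],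
            hnot⟩
  · exact ⟨F, ⟨a, w, hF⟩, rfl, Or.inr ⟨rfl, hev⟩⟩
end
end
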